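/- The matrix R_θ(A₁,…,Aₙ) := (R_θA₁)⋯(R_θAₙ) is elliptic if and only if θ (mod π) is not in the range of any of the n implicit functions H̃ⱼ; moreover if θ = H̃ⱼ(p) for some j and p then the logarithm of the spectral radius ρ(R_θA) equals |log‖R_θA · v_p‖|, and otherwise ρ(R_θA) = 0. -/

import Mathlib

open Real MeasureTheory intervalIntegral Matrix Polynomial

noncomputable section

/-- 2×2 real matrices. -/
abbrev Mat := Matrix (Fin 2) (Fin 2) ℝ

/-- The unit vector `v_p = (cos p, sin p)` spanning the line `ℓ_p ∈ P¹ = ℝ/πℤ`. -/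
def vec (p : ℝ) : Fin 2 → ℝ := ![Real.cos p, Real.sin p]

/-- Euclidean norm on ℝ². -/
def en (w : Fin 2 → ℝ) : ℝ := Real.sqrt (w 0 ^ 2 + w 1 ^ 2)

/-- Rotation matrix by angle θ. -/
def Rot (θ : ℝ) : Mat := !![Real.cos θ, -Real.sin θ; Real.sin θ, Real.cos θ]

/-- `parr w q` : the vector `w` is parallel to `v_q` (i.e. `w ∈ ℓ_q`). -/
def parr (w : Fin 2 → ℝ) (q : ℝ) : Prop := w 0 * Real.sin q - w 1 * Real.cos q = 0

/-- `IsLift A Φ` : `Φ : ℝ → ℝ` is a lift (mod π) of the projective action `Φ_A` of `A` on P¹. -/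
def IsLift (A : Mat) (Φ : ℝ → ℝ) : Prop := ∀ p : ℝ, parr (A.mulVec (vec p)) (Φ p)

/-- Operator (Euclidean) norm of a 2×2 matrix: sup of `‖A v_p‖` over the unit circle. -/
def opN (A : Mat) : ℝ := ⨆ p : ℝ, en (A.mulVec (vec p))

/-- Spectral radius of a real 2×2 matrix: the largest modulus of its complex eigenvalues. -/
def spectralRad (B : Mat) : ℝ :=
  sSup {x : ℝ | ∃ z : ℂ, (B.charpoly.map (algebraMap ℝ ℂ)).IsRoot z ∧ x = ‖z‖}

/-- The word product `R_θ A = (R_θ A₁)⋯(R_θ Aₙ)` of a list of matrices. -/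
def Wp (θ : ℝ) (l : List Mat) : Mat := (l.map fun B => Rot θ * B).prod

lemma cp2 {R} [CommRing R] (M : Matrix (Fin 2) (Fin 2) R) :
    M.charpoly = X^2 - C (M.trace) * X + C M.det := by
  rw [Matrix.charpoly, Matrix.det_fin_two]
  simp [charmatrix_apply_eq, charmatrix_apply_ne, Matrix.trace_fin_two, Matrix.det_fin_two]
  ring

lemma detRot (θ : ℝ) : (Rot θ).det = 1 := by
  simp [Rot, Matrix.det_fin_two_of]
  nlinarith [Real.sin_sq_add_cos_sq θ]

lemma detWp (θ : ℝ) (l : List Mat) (h : ∀ B ∈ l, B.det = 1) : (Wp θ l).det = 1 := by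
  induction l with
  | nil => simp [Wp]
  | cons a l ih =>
      simp only [Wp, List.map_cons, List.prod_cons] at *
      rw [Matrix.det_mul, Matrix.det_mul, detRot, h a (by simp), ih (fun B hB => h B (by simp [hB]))]
      ring

lemma evalcp (B : Mat) (hB : B.det = 1) (w : ℂ) :
    (B.charpoly.map (algebraMap ℝ ℂ)).IsRoot w ↔ w^2 - (B.trace : ℂ) * w + 1 = 0 := by
  rw [cp2, hB]
  simp [Polynomial.IsRoot, Polynomial.eval_map, Complex.coe_algebraMap]

lemma specLemma (B : Mat) (hB : B.det = 1) :
    ∃ z : ℂ, z ≠ 0 ∧ z^2 - (B.trace : ℂ) * z + 1 = 0 ∧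
      (∀ w : ℂ, w^2 - (B.trace : ℂ) * w + 1 = 0 ↔ (w = z ∨ w = z⁻¹)) ∧
      spectralRad B = max (‖z‖) (‖z‖)⁻¹ := by
  set t : ℂ := (B.trace : ℂ) with ht
  obtain ⟨s, hs⟩ := IsAlgClosed.exists_pow_nat_eq ((t/2)^2 - 1) (two_pos)
  set z : ℂ := t/2 + s with hz
  have hquad : z^2 - t * z + 1 = 0 := by
    rw [hz]; linear_combination hs
  have hprod : z * (t - z) = 1 := by linear_combination -hquad
  have hz0 : z ≠ 0 := by
    intro h; rw [h, zero_mul] at hprod; exact one_ne_zero hprod.symm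
  have hinv : z⁻¹ = t - z :=
    (eq_inv_of_mul_eq_one_left (by linear_combination hprod)).symm
  have hroots : ∀ w : ℂ, w^2 - t * w + 1 = 0 ↔ (w = z ∨ w = z⁻¹) := by
    intro w
    rw [hinv]
    constructor
    · intro h
      have : (w - z) * (w - (t - z)) = 0 := by linear_combination h + hprod
      rcases mul_eq_zero.mp this with h' | h'
      · exact Or.inl (sub_eq_zero.mp h')
      · exact Or.inr (sub_eq_zero.mp h')
    · rintro (rfl | rfl)
      · exact hquad
      · linear_combination hquad
  refine ⟨z, hz0, hquad, hroots, ?_⟩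
  have hset : {x : ℝ | ∃ w : ℂ, (B.charpoly.map (algebraMap ℝ ℂ)).IsRoot w ∧ x = ‖w‖}
      = {‖z‖, (‖z‖)⁻¹} := by
    ext x
    simp only [Set.mem_setOf_eq, Set.mem_insert_iff, Set.mem_singleton_iff]
    constructor
    · rintro ⟨w, hw, rfl⟩
      rcases (hroots w).mp ((evalcp B hB w).mp hw) with rfl | rfl
      · left; rfl
      · right; rw [norm_inv]
    · rintro (rfl | rfl)
      · exact ⟨z, (evalcp B hB z).mpr ((hroots z).mpr (Or.inl rfl)), rfl⟩
      · exact ⟨z⁻¹, (evalcp B hB _).mpr ((hroots _).mpr (Or.inr rfl)), (norm_inv _).symm⟩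
  rw [spectralRad, hset, csSup_pair]

lemma vec_ne (p : ℝ) : vec p ≠ 0 := by
  intro h
  have h0 := congrFun h 0
  have h1 := congrFun h 1
  simp [_root_.vec] at h0 h1
  nlinarith [Real.sin_sq_add_cos_sq p]

lemma parr_iff (w : Fin 2 → ℝ) (q : ℝ) : parr w q ↔ ∃ c : ℝ, w = c • vec q := by
  constructor
  · intro h
    refine ⟨w 0 * Real.cos q + w 1 * Real.sin q, ?_⟩
    simp only [parr] at h
    funext i
    fin_cases i
    · simp only [_root_.vec, Pi.smul_apply, smul_eq_mul]
      show w 0 = _ * Real.cos q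
      linear_combination (Real.sin q) * h - (w 0) * (Real.sin_sq_add_cos_sq q)
    · simp only [_root_.vec, Pi.smul_apply, smul_eq_mul]
      show w 1 = _ * Real.sin q
      linear_combination (-Real.cos q) * h - (w 1) * (Real.sin_sq_add_cos_sq q)
  · rintro ⟨c, rfl⟩
    simp [parr, _root_.vec, Pi.smul_apply, smul_eq_mul]
    ring

/-- every nonzero vector is a nonzero multiple of some `vec p` -/

lemma exists_angle (w : Fin 2 → ℝ) (hw : w ≠ 0) : ∃ (p : ℝ) (r : ℝ), r ≠ 0 ∧ w = r • vec p := by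
  set z : ℂ := ⟨w 0, w 1⟩ with hzdef
  have hz : z ≠ 0 := by
    intro h
    apply hw
    funext i
    fin_cases i
    · simpa using congrArg Complex.re h
    · simpa using congrArg Complex.im h
  have habs : (‖z‖) ≠ 0 := norm_ne_zero_iff.mpr hz
  refine ⟨z.arg, ‖z‖, habs, ?_⟩
  have hc := Complex.cos_arg hz
  have hs := Complex.sin_arg z
  funext i
  fin_cases i
  · show w 0 = ‖z‖ * Real.cos z.arg
    rw [hc]
    show w 0 = ‖z‖ * (w 0 / ‖z‖)
    field_simp
  · show w 1 = ‖z‖ * Real.sin z.arg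
    rw [hs]
    show w 1 = ‖z‖ * (w 1 / ‖z‖)
    field_simp

lemma detsub (B : Mat) (c : ℝ) : (c • (1:Mat) - B).det = c^2 - B.trace * c + B.det := by
  simp [Matrix.det_fin_two, Matrix.trace_fin_two, Matrix.smul_apply, Matrix.one_apply]
  ring

lemma eigen_iff (B : Mat) (c : ℝ) :
    (∃ w : Fin 2 → ℝ, w ≠ 0 ∧ B.mulVec w = c • w) ↔ c^2 - B.trace * c + B.det = 0 := by
  rw [← detsub, ← Matrix.exists_mulVec_eq_zero_iff]
  constructor
  · rintro ⟨w, hw, h⟩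
    exact ⟨w, hw, by rw [Matrix.sub_mulVec, Matrix.smul_mulVec, Matrix.one_mulVec, h,
      sub_self]⟩
  · rintro ⟨w, hw, h⟩
    refine ⟨w, hw, ?_⟩
    rw [Matrix.sub_mulVec, Matrix.smul_mulVec, Matrix.one_mulVec, sub_eq_zero] at h
    exact h.symm

lemma en_smul_vec (c p : ℝ) : en (c • vec p) = |c| := by
  simp only [en, Pi.smul_apply, smul_eq_mul, _root_.vec, Matrix.cons_val_zero, Matrix.cons_val_one,
    Matrix.head_cons]
  rw [show (c * Real.cos p)^2 + (c * Real.sin p)^2 = c^2 by nlinarith [Real.sin_sq_add_cos_sq p]]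
  exact Real.sqrt_sq_eq_abs c

lemma log_max_abs (a : ℝ) (ha : a ≠ 0) : Real.log (max |a| |a|⁻¹) = |Real.log (|a|)| := by
  have h0 : 0 < |a| := abs_pos.mpr ha
  rcases le_total |a| 1 with h | h
  · have h1 : |a| ≤ |a|⁻¹ := le_trans h ((one_le_inv₀ h0).mpr h)
    rw [max_eq_right h1, Real.log_inv, abs_of_nonpos (Real.log_nonpos h0.le h)]
  · have h1 : |a|⁻¹ ≤ |a| := le_trans (inv_le_one_of_one_le₀ h) h
    rw [max_eq_left h1, abs_of_nonneg (Real.log_nonneg h)]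

/-- `R_θA` is elliptic iff `θ` (mod π) is in the range of no `H̃ⱼ`; when
`θ = H̃ⱼ(p)` the log-spectral radius is `|log ‖R_θA v_p‖|`, and it vanishes otherwise. -/
theorem stmt14 (n : ℕ) (A : Fin (n+1) → Mat) (hdet : ∀ i, (A i).det = 1)
    (Htil : Fin (n+1) → ℝ → ℝ)
    (hdiff : ∀ j, Differentiable ℝ (Htil j))
    (hfix : ∀ j (p : ℝ), parr ((Wp (Htil j p) (List.ofFn A)).mulVec (vec p)) p)
    (hdist : ∀ (p : ℝ) (i j : Fin (n+1)), i ≠ j → ∀ k : ℤ, Htil i p ≠ Htil j p + k * π)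
    (hall : ∀ (θ p : ℝ),
      parr ((Wp θ (List.ofFn A)).mulVec (vec p)) p
        ↔ ∃ (j : Fin (n+1)) (k : ℤ), θ = Htil j p + k * π) :
    (∀ θ : ℝ,
      (¬ ∃ (c : ℝ) (w : Fin 2 → ℝ), w ≠ 0 ∧ (Wp θ (List.ofFn A)).mulVec w = c • w)
        ↔ ∀ (j : Fin (n+1)) (p : ℝ) (k : ℤ), θ ≠ Htil j p + k * π) ∧
    (∀ (j : Fin (n+1)) (p : ℝ),
      Real.log (spectralRad (Wp (Htil j p) (List.ofFn A)))
        = |Real.log (en ((Wp (Htil j p) (List.ofFn A)).mulVec (vec p)))|) ∧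
    (∀ θ : ℝ, (∀ (j : Fin (n+1)) (p : ℝ) (k : ℤ), θ ≠ Htil j p + k * π) →
      Real.log (spectralRad (Wp θ (List.ofFn A))) = 0) := by
  have hdetB : ∀ θ : ℝ, (Wp θ (List.ofFn A)).det = 1 := by
    intro θ
    refine detWp θ _ ?_
    intro Bm hBm
    rw [List.mem_ofFn] at hBm
    obtain ⟨i, rfl⟩ := hBm
    exact hdet i
  have eig_parr : ∀ θ : ℝ,
      (∃ (c : ℝ) (w : Fin 2 → ℝ), w ≠ 0 ∧ (Wp θ (List.ofFn A)).mulVec w = c • w) →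
      ∃ (p c : ℝ), (Wp θ (List.ofFn A)).mulVec (vec p) = c • vec p := by
    rintro θ ⟨c, w, hw, h⟩
    obtain ⟨p, r, hr, rfl⟩ := exists_angle w hw
    refine ⟨p, c, ?_⟩
    rw [Matrix.mulVec_smul] at h
    have h2 : r • ((Wp θ (List.ofFn A)).mulVec (vec p)) = r • (c • vec p) := by
      rw [h, smul_comm]
    exact smul_right_injective (Fin 2 → ℝ) hr h2
  refine ⟨?_, ?_, ?_⟩
  · intro θ
    constructor
    · intro hne j p k hθ
      obtain ⟨c, hc⟩ := (parr_iff _ _).mp ((hall θ p).mpr ⟨j, k, hθ⟩)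
      exact hne ⟨c, vec p, vec_ne p, hc⟩
    · rintro hforall ⟨c, w, hw, h⟩
      obtain ⟨p, c', h'⟩ := eig_parr θ ⟨c, w, hw, h⟩
      obtain ⟨j, k, hjk⟩ := (hall θ p).mp ((parr_iff _ _).mpr ⟨c', h'⟩)
      exact hforall j p k hjk
  · intro j p
    obtain ⟨c, hc⟩ := (parr_iff _ _).mp (hfix j p)
    set θ := Htil j p with hθ
    set B := Wp θ (List.ofFn A) with hB
    have hroot : c^2 - B.trace * c + 1 = 0 := by
      have := (eigen_iff B c).mp ⟨vec p, vec_ne p, hc⟩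
      rwa [hdetB θ] at this
    have hc0 : c ≠ 0 := by
      intro h; rw [h] at hroot; norm_num at hroot
    obtain ⟨z, hz0, hzq, hroots, hspec⟩ := specLemma B (hdetB θ)
    have hcz : (c : ℂ) = z ∨ (c : ℂ) = z⁻¹ := (hroots c).mp (by exact_mod_cast hroot)
    have habs : max (‖z‖) (‖z‖)⁻¹ = max |c| |c|⁻¹ := by
      rcases hcz with h | h
      · rw [← h, Complex.norm_real, Real.norm_eq_abs]
      · have : (‖z‖)⁻¹ = |c| := by
          rw [← Real.norm_eq_abs, ← Complex.norm_real c, h, norm_inv]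
        rw [← this, inv_inv, max_comm]
    rw [hspec, habs, hc, en_smul_vec, log_max_abs c hc0]
  · intro θ hforall
    obtain ⟨z, hz0, hzq, hroots, hspec⟩ := specLemma _ (hdetB θ)
    have hnoreal : ∀ c : ℝ, c^2 - (Wp θ (List.ofFn A)).trace * c + 1 ≠ 0 := by
      intro c hcroot
      obtain ⟨w, hw, h⟩ := (eigen_iff _ c).mpr (by rw [hdetB]; exact hcroot)
      obtain ⟨p, c', h'⟩ := eig_parr θ ⟨c, w, hw, h⟩
      obtain ⟨j, k, hjk⟩ := (hall θ p).mp ((parr_iff _ _).mpr ⟨c', h'⟩)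
      exact hforall j p k hjk
    have hconj : (starRingEnd ℂ) z = z ∨ (starRingEnd ℂ) z = z⁻¹ := by
      refine (hroots _).mp ?_
      have := congrArg (starRingEnd ℂ) hzq
      simpa [Complex.conj_ofReal] using this
    rcases hconj with h | h
    · exfalso
      have hzre : (z.re : ℂ) = z := Complex.conj_eq_iff_re.mp h
      apply hnoreal z.re
      have h2 : (z.re : ℂ)^2 - ((Wp θ (List.ofFn A)).trace : ℂ) * (z.re : ℂ) + 1 = 0 := by
        rw [hzre]; exact hzq
      exact_mod_cast h2
    · have habs1 : ‖z‖ = 1 := by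
        have h1 : z * (starRingEnd ℂ) z = 1 := by rw [h]; exact mul_inv_cancel₀ hz0
        rw [Complex.mul_conj] at h1
        have h3 : Complex.normSq z = 1 := by exact_mod_cast h1
        nlinarith [norm_nonneg z, Complex.sq_norm z]
      rw [hspec, habs1]
      norm_num
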